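/- The 3-gonal bipyramid BP₃ (triangulation of S² with vertices 1,2,3,a,b, where 1,2,3 form a 3-cycle each joined to a and to b) contains exactly one zigzag up to reversing, i.e., it is z-knotted; its zigzag has length 18 and passes through all edges of all faces. -/

import Mathlib

/-- A zigzag in a triangulation, written as a bi-infinite sequence of vertices
`z`: the edges of the zigzag are `eᵢ = {z i, z (i+1)}`.  Any two consecutive
edges are distinct, share the vertex `z (i+1)` and lie in a common (triangular)
face; the faces containing `eᵢ, eᵢ₊₁` and `eᵢ₊₁, eᵢ₊₂` are distinct, and the
edges `eᵢ` and `eᵢ₊₂` are disjoint. -/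
def IsZigzag {V : Type*} [DecidableEq V] (G : SimpleGraph V)
    (faces : Finset (Finset V)) (z : ℤ → V) : Prop :=
  ∀ i : ℤ,
    G.Adj (z i) (z (i + 1)) ∧
    z i ≠ z (i + 2) ∧
    (∃ F ∈ faces, z i ∈ F ∧ z (i + 1) ∈ F ∧ z (i + 2) ∈ F) ∧
    (∀ F ∈ faces, ∀ F' ∈ faces,
      (z i ∈ F ∧ z (i + 1) ∈ F ∧ z (i + 2) ∈ F) →
      (z (i + 1) ∈ F' ∧ z (i + 2) ∈ F' ∧ z (i + 3) ∈ F') → F ≠ F') ∧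
    ({z i, z (i + 1)} : Set V) ∩ {z (i + 2), z (i + 3)} = ∅

/-- The 3-gonal bipyramid BP₃: vertices 1,2,3 (here 0,1,2) forming a 3-cycle,
each joined to the apexes a (here 3) and b (here 4); this is the complete graph
on 5 vertices minus the edge {a,b}. -/
def BP3 : SimpleGraph (Fin 5) :=
  SimpleGraph.fromRel (fun x y => ¬(x = 3 ∧ y = 4) ∧ ¬(x = 4 ∧ y = 3))

/-- The six triangular faces of BP₃. -/
def BP3Faces : Finset (Finset (Fin 5)) :=
  {{0, 1, 3}, {1, 2, 3}, {0, 2, 3}, {0, 1, 4}, {1, 2, 4}, {0, 2, 4}}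

/-- The 18-periodic vertex sequence a,1,2,b,3,1,a,2,3,b,1,2,a,3,1,b,2,3 of the
zigzag a1,12,2b,b3,31,1a,a2,23,3b,b1,12,2a,a3,31,1b,b2,23,3a. -/
def bpZigzag : ℤ → Fin 5 :=
  fun i => ![3, 0, 1, 4, 2, 0, 3, 1, 2, 4, 0, 1, 3, 2, 0, 4, 1, 2]
    ⟨(i % 18).toNat, by omega⟩

/- ### Auxiliary machinery -/

instance : DecidableRel BP3.Adj := fun a b =>
  decidable_of_iff _ (SimpleGraph.fromRel_adj _ a b).symm

/-- The local condition of a zigzag on four consecutive vertices, with the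
set-disjointness condition replaced by four inequalities. -/
def Cond4 (a b c d : Fin 5) : Prop :=
  BP3.Adj a b ∧ a ≠ c ∧
  (∃ F ∈ BP3Faces, a ∈ F ∧ b ∈ F ∧ c ∈ F) ∧
  (∃ F ∈ BP3Faces, b ∈ F ∧ c ∈ F ∧ d ∈ F) ∧
  (∀ F ∈ BP3Faces, ∀ F' ∈ BP3Faces,
      (a ∈ F ∧ b ∈ F ∧ c ∈ F) → (b ∈ F' ∧ c ∈ F' ∧ d ∈ F') → F ≠ F') ∧
  (a ≠ c ∧ a ≠ d ∧ b ≠ c ∧ b ≠ d)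

instance (a b c d : Fin 5) : Decidable (Cond4 a b c d) := by
  unfold Cond4
  refine @instDecidableAnd _ _ ?_ (@instDecidableAnd _ _ ?_ (@instDecidableAnd _ _ ?_
    (@instDecidableAnd _ _ ?_ (@instDecidableAnd _ _ ?_ ?_)))) <;> infer_instance

lemma pair_disj {a b c d : Fin 5} :
    ({a, b} : Set (Fin 5)) ∩ {c, d} = ∅ ↔ (a ≠ c ∧ a ≠ d ∧ b ≠ c ∧ b ≠ d) := by
  simp only [Set.eq_empty_iff_forall_notMem, Set.mem_inter_iff, Set.mem_insert_iff,
    Set.mem_singleton_iff, not_and, not_or]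
  constructor
  · intro h
    exact ⟨(h a (Or.inl rfl)).1, (h a (Or.inl rfl)).2, (h b (Or.inr rfl)).1,
      (h b (Or.inr rfl)).2⟩
  · rintro ⟨h1, h2, h3, h4⟩ x (rfl | rfl) <;> exact ⟨by assumption, by assumption⟩

lemma zigzag_iff (z : ℤ → Fin 5) :
    IsZigzag BP3 BP3Faces z ↔ ∀ i, Cond4 (z i) (z (i+1)) (z (i+2)) (z (i+3)) := by
  constructor
  · intro h i
    obtain ⟨h1, h2, h3, h4, h5⟩ := h i
    obtain ⟨-, -, h3', -, -⟩ := h (i+1)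
    rw [show i+1+1 = i+2 by ring, show i+1+2 = i+3 by ring] at h3'
    exact ⟨h1, h2, h3, h3', h4, pair_disj.mp h5⟩
  · intro h i
    obtain ⟨h1, h2, h3, -, h4, h5⟩ := h i
    exact ⟨h1, h2, h3, h4, pair_disj.mpr h5⟩

lemma det : ∀ a b c d d' : Fin 5, Cond4 a b c d → Cond4 a b c d' → d = d' := by decide

lemma cond4_rev : ∀ a b c d : Fin 5, Cond4 a b c d → Cond4 d c b a := by decide

lemma detb : ∀ a a' b c d : Fin 5, Cond4 a b c d → Cond4 a' b c d → a = a' :=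
  fun _ _ _ _ _ h h' => det _ _ _ _ _ (cond4_rev _ _ _ _ h) (cond4_rev _ _ _ _ h')

def bpTable : Fin 18 → Fin 5 := ![3, 0, 1, 4, 2, 0, 3, 1, 2, 4, 0, 1, 3, 2, 0, 4, 1, 2]

def bpVal (n : ℕ) : Fin 5 := bpTable ⟨n % 18, Nat.mod_lt _ (by norm_num)⟩

lemma bp_eq_val (i : ℤ) (n : ℕ) (h : (i % 18).toNat = n % 18) : bpZigzag i = bpVal n := by
  unfold bpZigzag bpVal bpTable
  congr 1
  exact Fin.ext h

lemma bp_key : ∀ r : Fin 18,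
    Cond4 (bpVal r.1) (bpVal (r.1+1)) (bpVal (r.1+2)) (bpVal (r.1+3)) := by decide

lemma bp_cond4 : ∀ i : ℤ,
    Cond4 (bpZigzag i) (bpZigzag (i+1)) (bpZigzag (i+2)) (bpZigzag (i+3)) := by
  intro i
  rw [bp_eq_val i (i % 18).toNat (by omega),
      bp_eq_val (i+1) ((i % 18).toNat + 1) (by omega),
      bp_eq_val (i+2) ((i % 18).toNat + 2) (by omega),
      bp_eq_val (i+3) ((i % 18).toNat + 3) (by omega)]
  exact bp_key ⟨(i % 18).toNat, by omega⟩

lemma helper : ∀ a b c d : Fin 5, Cond4 a b c d → ∃ r : Fin 18,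
    (bpVal r.1 = a ∧ bpVal (r.1+1) = b ∧ bpVal (r.1+2) = c) ∨
    (bpVal r.1 = c ∧ bpVal (r.1+1) = b ∧ bpVal (r.1+2) = a) := by decide

lemma helper2 : ∀ F ∈ BP3Faces, ∀ x ∈ F, ∀ y ∈ F, x ≠ y → ∃ r : Fin 18,
    (bpVal r.1 = x ∧ bpVal (r.1+1) = y) ∨ (bpVal r.1 = y ∧ bpVal (r.1+1) = x) := by decide

lemma period_helper : ∀ m : Fin 18, m.1 ≠ 0 →
    ∃ r : Fin 18, bpVal (r.1 + m.1) ≠ bpVal r.1 := by decide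

lemma cond4_shift (z : ℤ → Fin 5) (k : ℤ)
    (h : ∀ i, Cond4 (z i) (z (i+1)) (z (i+2)) (z (i+3))) :
    ∀ i, Cond4 (z (i+k)) (z (i+1+k)) (z (i+2+k)) (z (i+3+k)) := by
  intro i
  rw [show i+1+k = i+k+1 by ring, show i+2+k = i+k+2 by ring, show i+3+k = i+k+3 by ring]
  exact h (i+k)

lemma cond4_revshift (z : ℤ → Fin 5) (k : ℤ)
    (h : ∀ i, Cond4 (z i) (z (i+1)) (z (i+2)) (z (i+3))) :
    ∀ i, Cond4 (z (-(i+k))) (z (-(i+1+k))) (z (-(i+2+k))) (z (-(i+3+k))) := by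
  intro i
  rw [show -(i+k) = -(i+k+3)+3 by ring, show -(i+1+k) = -(i+k+3)+2 by ring,
      show -(i+2+k) = -(i+k+3)+1 by ring, show -(i+3+k) = -(i+k+3) by ring]
  exact cond4_rev _ _ _ _ (h (-(i+k+3)))

lemma propagate (z w : ℤ → Fin 5)
    (hz : ∀ i, Cond4 (z i) (z (i+1)) (z (i+2)) (z (i+3)))
    (hw : ∀ i, Cond4 (w i) (w (i+1)) (w (i+2)) (w (i+3)))
    (h0 : z 0 = w 0) (h1 : z 1 = w 1) (h2 : z 2 = w 2) : ∀ i, z i = w i := by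
  have key : ∀ i : ℤ, z i = w i ∧ z (i+1) = w (i+1) ∧ z (i+2) = w (i+2) := by
    intro i
    induction i using Int.induction_on with
    | zero =>
      refine ⟨h0, ?_, ?_⟩
      · rw [show (0:ℤ)+1 = 1 by ring]; exact h1
      · rw [show (0:ℤ)+2 = 2 by ring]; exact h2
    | succ n ih =>
      obtain ⟨e0, e1, e2⟩ := ih
      have c1 := hz (n : ℤ)
      rw [e0, e1, e2] at c1
      have e3 : z ((n:ℤ)+3) = w ((n:ℤ)+3) := det _ _ _ _ _ c1 (hw (n : ℤ))
      refine ⟨e1, ?_, ?_⟩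
      · rw [show ((n:ℤ))+1+1 = (n:ℤ)+2 by ring]; exact e2
      · rw [show ((n:ℤ))+1+2 = (n:ℤ)+3 by ring]; exact e3
    | pred n ih =>
      obtain ⟨e0, e1, e2⟩ := ih
      have c1 := hz (-(n:ℤ) - 1)
      have c2 := hw (-(n:ℤ) - 1)
      rw [show -(n:ℤ) - 1 + 1 = -(n:ℤ) by ring, show -(n:ℤ) - 1 + 2 = -(n:ℤ) + 1 by ring,
          show -(n:ℤ) - 1 + 3 = -(n:ℤ) + 2 by ring] at c1 c2
      rw [e0, e1, e2] at c1
      have e3 : z (-(n:ℤ) - 1) = w (-(n:ℤ) - 1) := detb _ _ _ _ _ c1 c2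
      refine ⟨e3, ?_, ?_⟩
      · rw [show -(n:ℤ) - 1 + 1 = -(n:ℤ) by ring]; exact e0
      · rw [show -(n:ℤ) - 1 + 2 = -(n:ℤ) + 1 by ring]; exact e1
  exact fun i => (key i).1

/-- BP₃ is z-knotted: it contains exactly one zigzag up to reversing, of length
18, and this zigzag passes through all edges of all faces. -/
theorem BP3_z_knotted :
    IsZigzag BP3 BP3Faces bpZigzag ∧
    (∀ z : ℤ → Fin 5, IsZigzag BP3 BP3Faces z ↔
      ∃ k : ℤ, z = (fun i => bpZigzag (i + k)) ∨ z = (fun i => bpZigzag (-(i + k)))) ∧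
    (∀ i : ℤ, bpZigzag (i + 18) = bpZigzag i) ∧
    (∀ m : ℤ, 0 < m → (∀ i : ℤ, bpZigzag (i + m) = bpZigzag i) → 18 ≤ m) ∧
    (∀ F ∈ BP3Faces, ∀ x ∈ F, ∀ y ∈ F, x ≠ y →
      ∃ i : ℤ, (bpZigzag i = x ∧ bpZigzag (i + 1) = y) ∨
        (bpZigzag i = y ∧ bpZigzag (i + 1) = x)) := by
  refine ⟨(zigzag_iff bpZigzag).2 bp_cond4, ?_, ?_, ?_, ?_⟩
  · intro z
    constructor
    · intro hz
      have hc := (zigzag_iff z).1 hz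
      have c0 := hc 0
      rw [show (0:ℤ)+1 = 1 by ring, show (0:ℤ)+2 = 2 by ring,
          show (0:ℤ)+3 = 3 by ring] at c0
      obtain ⟨r, hr | hr⟩ := helper _ _ _ _ c0
      · refine ⟨(r.1 : ℤ), Or.inl (funext fun i => ?_)⟩
        refine propagate z (fun i => bpZigzag (i + (r.1:ℤ))) hc
          (cond4_shift bpZigzag (r.1:ℤ) bp_cond4) ?_ ?_ ?_ i
        · exact ((bp_eq_val (0 + (r.1:ℤ)) r.1 (by omega)).trans hr.1).symm
        · exact ((bp_eq_val (1 + (r.1:ℤ)) (r.1+1) (by omega)).trans hr.2.1).symm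
        · exact ((bp_eq_val (2 + (r.1:ℤ)) (r.1+2) (by omega)).trans hr.2.2).symm
      · refine ⟨-((r.1:ℤ)+2), Or.inr (funext fun i => ?_)⟩
        refine propagate z (fun i => bpZigzag (-(i + -((r.1:ℤ)+2)))) hc
          (cond4_revshift bpZigzag (-((r.1:ℤ)+2)) bp_cond4) ?_ ?_ ?_ i
        · exact ((bp_eq_val (-(0 + -((r.1:ℤ)+2))) (r.1+2) (by omega)).trans hr.2.2).symm
        · exact ((bp_eq_val (-(1 + -((r.1:ℤ)+2))) (r.1+1) (by omega)).trans hr.2.1).symm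
        · exact ((bp_eq_val (-(2 + -((r.1:ℤ)+2))) r.1 (by omega)).trans hr.1).symm
    · rintro ⟨k, rfl | rfl⟩
      · exact (zigzag_iff _).2 (cond4_shift bpZigzag k bp_cond4)
      · exact (zigzag_iff _).2 (cond4_revshift bpZigzag k bp_cond4)
  · intro i
    rw [bp_eq_val (i+18) (i % 18).toNat (by omega), bp_eq_val i (i % 18).toNat (by omega)]
  · intro m hm hper
    by_contra hlt
    push_neg at hlt
    obtain ⟨r, hr⟩ := period_helper ⟨m.toNat, by omega⟩ (by simp; omega)
    apply hr
    calc bpVal (r.1 + m.toNat) = bpZigzag ((r.1:ℤ) + m) :=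
          (bp_eq_val _ _ (by omega)).symm
      _ = bpZigzag (r.1:ℤ) := hper (r.1:ℤ)
      _ = bpVal r.1 := bp_eq_val _ _ (by omega)
  · intro F hF x hx y hy hxy
    obtain ⟨r, hr⟩ := helper2 F hF x hx y hy hxy
    refine ⟨(r.1:ℤ), ?_⟩
    rw [bp_eq_val (r.1:ℤ) r.1 (by omega), bp_eq_val ((r.1:ℤ)+1) (r.1+1) (by omega)]
    exact hr
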